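/- Let m, n be natural numbers with m ≥ 2, let λ > 1 be a real, set T := λ·√(mn), and let a > 0, b > 0 be reals. Suppose q_1, …, q_{m−1} are nonnegative reals satisfying q_ℓ ≤ (T/(mn) − 1/T)^ℓ · (1 − T/(mn))^{m−ℓ−1} · ℓ·b/(T·a) for every 1 ≤ ℓ ≤ m − 1. Then (m−1) · Σ_{ℓ=1}^{m−1} C(m−2, ℓ−1) · q_ℓ ≤ (1 − 1/λ²) · (b·(m−1)/(a·m·n)) · (1 − 1/T)^{m−3} · (1 − 1/(λ√(mn)) + (λ − 1/λ)·(m−2)/√(mn)), where C(·,·) denotes the binomial coefficient. -/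

import Mathlib

set_option maxHeartbeats 1000000
open Finset

lemma sum_succ_choose_mul (M : ℕ) (x y : ℝ) :
    ∑ k ∈ range (M+1), ((k:ℝ)+1) * (M.choose k : ℝ) * (x^k * y^(M-k))
      = (x+y)^M + (M:ℝ) * x * (x+y)^(M-1) := by
  have h1 : ∑ k ∈ range (M+1), (M.choose k : ℝ) * (x^k * y^(M-k)) = (x+y)^M := by
    rw [add_pow]
    exact Finset.sum_congr rfl (by intros; ring)
  have h2 : ∑ k ∈ range (M+1), (k:ℝ) * (M.choose k : ℝ) * (x^k * y^(M-k))
      = (M:ℝ) * x * (x+y)^(M-1) := by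
    cases M with
    | zero => simp
    | succ N =>
      rw [Finset.sum_range_succ']
      simp only [Nat.cast_zero, zero_mul, add_zero]
      have : ∀ j ∈ range (N+1), ((j:ℝ)+1) * ((N+1).choose (j+1) : ℝ) * (x^(j+1) * y^(N+1-(j+1)))
          = ((N:ℝ)+1) * x * ((N.choose j : ℝ) * (x^j * y^(N-j))) := by
        intro j hj
        have := Nat.add_one_mul_choose_eq N j
        have hc : ((j:ℝ)+1) * ((N+1).choose (j+1) : ℝ) = ((N:ℝ)+1) * (N.choose j : ℝ) := by
          have := congrArg (Nat.cast : ℕ → ℝ) (Nat.add_one_mul_choose_eq N j)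
          push_cast at this
          linarith [this]
        rw [Nat.succ_sub_succ]
        rw [pow_succ]
        calc ((j:ℝ)+1) * ((N+1).choose (j+1) : ℝ) * (x^j * x * y^(N-j))
            = (((j:ℝ)+1) * ((N+1).choose (j+1) : ℝ)) * (x^j * x * y^(N-j)) := by ring
          _ = (((N:ℝ)+1) * (N.choose j : ℝ)) * (x^j * x * y^(N-j)) := by rw [hc]
          _ = ((N:ℝ)+1) * x * ((N.choose j : ℝ) * (x^j * y^(N-j))) := by ring
      push_cast
      calc ∑ j ∈ range (N+1), ((j:ℝ)+1) * ((N+1).choose (j+1) : ℝ) * (x^(j+1) * y^(N-j))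
          = ∑ j ∈ range (N+1), ((N:ℝ)+1) * x * ((N.choose j : ℝ) * (x^j * y^(N-j))) := by
            refine Finset.sum_congr rfl ?_
            intro j hj
            have := this j hj
            rw [Nat.succ_sub_succ] at this
            exact this
        _ = ((N:ℝ)+1) * x * ∑ j ∈ range (N+1), (N.choose j : ℝ) * (x^j * y^(N-j)) := by
            rw [Finset.mul_sum]
        _ = ((N:ℝ)+1) * x * (x+y)^N := by
            rw [show ∑ j ∈ range (N+1), (N.choose j : ℝ) * (x^j * y^(N-j)) = (x+y)^N by
              rw [add_pow]; exact Finset.sum_congr rfl (by intros; ring)]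
  calc ∑ k ∈ range (M+1), ((k:ℝ)+1) * (M.choose k : ℝ) * (x^k * y^(M-k))
      = ∑ k ∈ range (M+1), ((k:ℝ) * (M.choose k : ℝ) * (x^k * y^(M-k))
          + (M.choose k : ℝ) * (x^k * y^(M-k))) := Finset.sum_congr rfl (by intros; ring)
    _ = _ := by rw [Finset.sum_add_distrib, h1, h2]; ring

lemma sum_Icc_one (M : ℕ) (f : ℕ → ℝ) :
    ∑ ℓ ∈ Finset.Icc 1 (M+1), f ℓ = ∑ k ∈ Finset.range (M+1), f (k+1) := by
  induction M with
  | zero => simp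
  | succ N ih =>
    rw [Finset.sum_Icc_succ_top (by omega), ih, ← Finset.sum_range_succ]

lemma zpow_helper (M : ℕ) (s x : ℝ) (hs : s ≠ 0) :
    s^M + (M:ℝ)*x*s^(M-1) = s^((M:ℤ)-1) * (s + (M:ℝ)*x) := by
  cases M with
  | zero => simp [zpow_neg, inv_mul_cancel₀ hs]
  | succ N =>
    have : ((N:ℤ)+1)-1 = (N:ℤ) := by ring
    push_cast
    rw [this, zpow_natCast, pow_succ]
    ring

/-- if each `q_ℓ` satisfies the paper's upper bound for `T = λ√(mn)`, then
`(m−1)·Σ_{ℓ=1}^{m−1} C(m−2,ℓ−1)·q_ℓ ≤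
  (1 − 1/λ²)·(b(m−1)/(amn))·(1 − 1/T)^{m−3}·(1 − 1/(λ√(mn)) + (λ − 1/λ)(m−2)/√(mn))`,
where `(1 − 1/T)^{m−3}` is an integer power (the exponent is `−1` when `m = 2`). -/
theorem low_prob_no_T_bound (m n : ℕ) (hm : 2 ≤ m) (lam T : ℝ) (hlam : 1 < lam)
    (hT : T = lam * Real.sqrt (m * n)) (hTmn : T ≤ (m * n : ℝ))
    (a b : ℝ) (ha : 0 < a) (hb : 0 < b)
    (q : ℕ → ℝ) (hq0 : ∀ ℓ, 1 ≤ ℓ → ℓ ≤ m - 1 → 0 ≤ q ℓ)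
    (hq : ∀ ℓ, 1 ≤ ℓ → ℓ ≤ m - 1 →
      q ℓ ≤ (T / (m * n) - 1 / T) ^ ℓ * (1 - T / (m * n)) ^ (m - ℓ - 1) *
            (ℓ * b / (T * a))) :
    ((m : ℝ) - 1) * ∑ ℓ ∈ Finset.Icc 1 (m - 1), ((m - 2).choose (ℓ - 1) : ℝ) * q ℓ ≤
      (1 - 1 / lam ^ 2) * (b * ((m : ℝ) - 1) / (a * m * n)) * (1 - 1 / T) ^ ((m : ℤ) - 3) *
        (1 - 1 / (lam * Real.sqrt (m * n)) +
          (lam - 1 / lam) * ((m : ℝ) - 2) / Real.sqrt (m * n)) := by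
  rcases Nat.eq_zero_or_pos n with hn0 | hn
  · -- degenerate case n = 0
    subst hn0
    have hs0 : Real.sqrt ((m:ℝ) * (0:ℕ)) = 0 := by simp
    have hT0 : T = 0 := by rw [hT, hs0, mul_zero]
    have hqz : ∀ ℓ ∈ Finset.Icc 1 (m-1), ((m - 2).choose (ℓ - 1) : ℝ) * q ℓ = 0 := by
      intro ℓ hℓ
      rw [Finset.mem_Icc] at hℓ
      have h1 := hq ℓ hℓ.1 hℓ.2
      have h2 := hq0 ℓ hℓ.1 hℓ.2
      rw [hT0] at h1
      simp at h1
      have : q ℓ = 0 := le_antisymm h1 h2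
      rw [this, mul_zero]
    rw [Finset.sum_congr rfl hqz]
    simp
  -- main case
  have hmn : (0:ℝ) < (m:ℝ) * n := by
    have : 0 < m := by omega
    positivity
  have hmn1 : (1:ℝ) ≤ (m:ℝ) * n := by
    have : (1:ℕ) ≤ m * n := Nat.one_le_iff_ne_zero.mpr (by positivity)
    exact_mod_cast this
  have hsq1 : (1:ℝ) ≤ Real.sqrt ((m:ℝ) * n) := by
    rw [show (1:ℝ) = Real.sqrt 1 by simp]
    exact Real.sqrt_le_sqrt hmn1
  have hT1 : 1 < T := by
    rw [hT]
    nlinarith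
  have hTpos : 0 < T := by linarith
  have hT2 : T^2 = lam^2 * ((m:ℝ)*n) := by
    rw [hT, mul_pow, Real.sq_sqrt (le_of_lt hmn)]
  set M : ℕ := m - 2 with hM
  have hm1 : m - 1 = M + 1 := by omega
  have hMcast : (M:ℝ) = (m:ℝ) - 2 := by
    have : (M:ℤ) = (m:ℤ) - 2 := by omega
    exact_mod_cast this
  set x : ℝ := T / ((m:ℝ)*n) - 1/T with hxdef
  set y : ℝ := 1 - T / ((m:ℝ)*n) with hydef
  set s : ℝ := 1 - 1/T with hsdef
  have hxy : x + y = s := by rw [hxdef, hydef, hsdef]; ring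
  have hspos : 0 < s := by
    rw [hsdef]
    have : 1/T < 1 := by rw [div_lt_one hTpos]; exact hT1
    linarith
  have hx : x = (lam^2 - 1)/T := by
    rw [hxdef]
    field_simp
    nlinarith [hT2]
  -- Step 1: pointwise bound
  have step1 : ((m : ℝ) - 1) * ∑ ℓ ∈ Finset.Icc 1 (m - 1), ((m - 2).choose (ℓ - 1) : ℝ) * q ℓ ≤
      ((m : ℝ) - 1) * ∑ ℓ ∈ Finset.Icc 1 (m - 1), ((m - 2).choose (ℓ - 1) : ℝ) *
        (x ^ ℓ * y ^ (m - ℓ - 1) * (ℓ * b / (T * a))) := by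
    apply mul_le_mul_of_nonneg_left _ (by
      have : (2:ℝ) ≤ m := by exact_mod_cast hm
      linarith)
    apply Finset.sum_le_sum
    intro ℓ hℓ
    rw [Finset.mem_Icc] at hℓ
    exact mul_le_mul_of_nonneg_left (hq ℓ hℓ.1 hℓ.2) (Nat.cast_nonneg _)
  refine step1.trans_eq ?_
  -- Step 2: compute the sum exactly
  have hsum : ∑ ℓ ∈ Finset.Icc 1 (m - 1), ((m - 2).choose (ℓ - 1) : ℝ) *
        (x ^ ℓ * y ^ (m - ℓ - 1) * (ℓ * b / (T * a)))
      = (b/(T*a)) * x * ∑ k ∈ Finset.range (M+1),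
          ((k:ℝ)+1) * (M.choose k : ℝ) * (x^k * y^(M-k)) := by
    rw [hm1, sum_Icc_one, Finset.mul_sum]
    refine Finset.sum_congr rfl ?_
    intro k hk
    have h1 : k + 1 - 1 = k := by omega
    have h2 : m - (k + 1) - 1 = M - k := by omega
    rw [h1, h2]
    push_cast
    rw [pow_succ]
    ring
  rw [hsum, sum_succ_choose_mul, hxy, zpow_helper M s x (ne_of_gt hspos)]
  rw [← hT]
  have hz : ((M:ℤ) - 1) = (m:ℤ) - 3 := by omega
  rw [hz]
  have hlast : 1 - 1/T + (lam - 1/lam) * ((m:ℝ) - 2) / Real.sqrt ((m:ℝ)*n)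
      = s + (M:ℝ) * x := by
    rw [hsdef, hMcast, hx]
    have hsqpos : 0 < Real.sqrt ((m:ℝ)*n) := by linarith
    have hlp : (0:ℝ) < lam := by linarith
    rw [hT]
    field_simp
  rw [hlast]
  have hcoef : ((m:ℝ) - 1) * (b/(T*a)) * x = (1 - 1/lam^2) * (b * ((m:ℝ)-1) / (a*m*n)) := by
    rw [hx]
    have hlp : (0:ℝ) < lam := by linarith
    field_simp
    linear_combination (-(lam^2-1)*((m:ℝ)-1)) * hT2
  calc ((m : ℝ) - 1) * ((b/(T*a)) * x * (s ^ ((m:ℤ)-3) * (s + (M:ℝ)*x)))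
      = (((m:ℝ) - 1) * (b/(T*a)) * x) * s ^ ((m:ℤ)-3) * (s + (M:ℝ)*x) := by ring
    _ = (1 - 1/lam^2) * (b * ((m:ℝ)-1) / (a*m*n)) * s ^ ((m:ℤ)-3) * (s + (M:ℝ)*x) := by
        rw [hcoef]
    _ = _ := rfl
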